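/- Let C ⊆ ℕ^p be an integer cone, ⪯ an admissible total order on ℕ^p, f ∈ C \ {0}, let T be a B-semigroup with respect to f, and let x ∈ B(f) \ T. Then T ∪ {x} is a B-semigroup with respect to f satisfying (T ∪ {x}) \ {α(T ∪ {x})} = T if and only if x ∈ SG(T) and x ≺ α(T). -/
import Mathlib


open Set BigOperators

/-- `C` is an integer cone: the intersection with `ℕ^p` of the set of nonnegative
real linear combinations of a finite set `A ⊆ ℕ^p`. -/
def IsIntegerCone (p : ℕ) (C : Set (Fin p → ℕ)) : Prop :=
  ∃ A : Finset (Fin p → ℕ),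
    C = {x : Fin p → ℕ | ∃ l : (Fin p → ℕ) → ℝ,
      (∀ a, 0 ≤ l a) ∧ ∀ i, (x i : ℝ) = ∑ a ∈ A, l a * (a i : ℝ)}

/-- An admissible total order on `ℕ^p`: total, compatible with addition,
with `0` minimum, and with finite down-sets. -/
structure AdmissibleOrder (p : ℕ) where
  le : (Fin p → ℕ) → (Fin p → ℕ) → Prop
  le_refl : ∀ x, le x x
  le_antisymm : ∀ x y, le x y → le y x → x = y
  le_trans : ∀ x y z, le x y → le y z → le x z
  le_total : ∀ x y, le x y ∨ le y x
  add_right : ∀ x y z, le x y → le (x + z) (y + z)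
  zero_le : ∀ x, le 0 x
  finite_le : ∀ f, {x : Fin p → ℕ | le x f}.Finite

/-- Strict version of an admissible order. -/
def AdmissibleOrder.lt {p : ℕ} (O : AdmissibleOrder p) (x y : Fin p → ℕ) : Prop :=
  O.le x y ∧ x ≠ y

/-- `S` is a `C`-semigroup: a submonoid of `ℕ^p` contained in `C` with finite complement in `C`. -/
def IsCSemigroup {p : ℕ} (C S : Set (Fin p → ℕ)) : Prop :=
  S ⊆ C ∧ 0 ∈ S ∧ (∀ x ∈ S, ∀ y ∈ S, x + y ∈ S) ∧ (C \ S).Finite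

/-- `f` is the Frobenius element of `S`: the `⪯`-maximum of `C \ S`. -/
def IsFrob {p : ℕ} (O : AdmissibleOrder p) (C S : Set (Fin p → ℕ)) (f : Fin p → ℕ) : Prop :=
  f ∈ C \ S ∧ ∀ x ∈ C \ S, O.le x f

/-- `B(f) = {x ∈ C : f - x ∈ C}`. -/
def BSet {p : ℕ} (C : Set (Fin p → ℕ)) (f : Fin p → ℕ) : Set (Fin p → ℕ) :=
  {x | x ∈ C ∧ ∃ y ∈ C, x + y = f}

/-- `N(f) = #{x ∈ C \ {0} : x ⪯ f}`. -/
noncomputable def NNum {p : ℕ} (O : AdmissibleOrder p) (C : Set (Fin p → ℕ)) (f : Fin p → ℕ) : ℕ :=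
  {x | x ∈ C ∧ x ≠ 0 ∧ O.le x f}.ncard

/-- The genus of `S`: the number of gaps `#(C \ S)`. -/
noncomputable def genusOf {p : ℕ} (C S : Set (Fin p → ℕ)) : ℕ := (C \ S).ncard

/-- The number of small elements `n(S) = #{s ∈ S : s ≺ Fb(S)}`; an element is smaller than
the Frobenius element iff it is strictly smaller than some gap. -/
noncomputable def smallCount {p : ℕ} (O : AdmissibleOrder p) (C S : Set (Fin p → ℕ)) : ℕ :=
  {s | s ∈ S ∧ ∃ h ∈ C \ S, O.lt s h}.ncard

/-- The minimal generating set of `S`. -/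
def msg {p : ℕ} (S : Set (Fin p → ℕ)) : Set (Fin p → ℕ) :=
  (S \ {0}) \ {x | ∃ a ∈ S \ {0}, ∃ b ∈ S \ {0}, a + b = x}

/-- `S` is a `B`-semigroup with respect to `f`. -/
def IsBSemigroup {p : ℕ} (O : AdmissibleOrder p) (C S : Set (Fin p → ℕ)) (f : Fin p → ℕ) : Prop :=
  IsCSemigroup C S ∧ IsFrob O C S f ∧ C \ BSet C f ⊆ S

/-- `a = α(S)`, the `⪯`-minimum of `(S \ {0}) ∩ B(f)`, with the convention `α(S) = f`
when `S ∩ B(f) = {0}`. -/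
def IsAlpha {p : ℕ} (O : AdmissibleOrder p) (C S : Set (Fin p → ℕ)) (f a : Fin p → ℕ) : Prop :=
  (a ∈ S ∧ a ≠ 0 ∧ a ∈ BSet C f ∧ ∀ x ∈ S, x ≠ 0 → x ∈ BSet C f → O.le a x)
  ∨ ((∀ x ∈ S ∩ BSet C f, x = 0) ∧ a = f)

/-- `x` is a special gap of `T`. -/
def SpecialGap {p : ℕ} (C T : Set (Fin p → ℕ)) (x : Fin p → ℕ) : Prop :=
  x ∈ C \ T ∧ x + x ∈ T ∧ ∀ t ∈ T, t ≠ 0 → x + t ∈ T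

/-- `l = λ(S)`, the `⪯`-largest gap of `S` lying outside `B(f)` (no convention case). -/
def IsLambdaGap {p : ℕ} (O : AdmissibleOrder p) (C S : Set (Fin p → ℕ)) (f l : Fin p → ℕ) : Prop :=
  l ∈ C \ S ∧ l ∉ BSet C f ∧ ∀ x ∈ C \ S, x ∉ BSet C f → O.le x l

/-- `l = λ(S)`, with the convention `λ(S) = 0` when `S` has no gap outside `B(f)`. -/
def IsLambda {p : ℕ} (O : AdmissibleOrder p) (C S : Set (Fin p → ℕ)) (f l : Fin p → ℕ) : Prop :=
  IsLambdaGap O C S f l ∨ ((∀ x ∈ C \ S, x ∈ BSet C f) ∧ l = 0)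

/-- `x ≤_C y` iff `y - x ∈ C`. -/
def leC {p : ℕ} (C : Set (Fin p → ℕ)) (x y : Fin p → ℕ) : Prop := ∃ d ∈ C, x + d = y

/-- The ordinary `C`-semigroup `S_c = {0} ∪ {x ∈ C : c ⪯ x}`. -/
def ordinarySemigroup {p : ℕ} (O : AdmissibleOrder p) (C : Set (Fin p → ℕ))
    (c : Fin p → ℕ) : Set (Fin p → ℕ) :=
  insert 0 {x | x ∈ C ∧ O.le c x}

/-- `S` is an arf semigroup in `C`. -/
def ArfSemigroup {p : ℕ} (C S : Set (Fin p → ℕ)) : Prop :=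
  ∀ x ∈ S, ∀ y ∈ S, ∀ z ∈ S, leC C z y → leC C y x →
    ∀ w : Fin p → ℕ, w + z = x + y → w ∈ S

/-- `S` is a saturated semigroup in `C`: whenever `s, s₁, …, s_r ∈ S` with `s_i ≤_C s`,
and `z : Fin r → ℤ` with `z₁s₁ + ⋯ + z_rs_r ∈ C` (as an element `t` of `ℕ^p`),
then `s + z₁s₁ + ⋯ + z_rs_r = s + t ∈ S`. -/
def SaturatedSemigroup {p : ℕ} (C S : Set (Fin p → ℕ)) : Prop :=
  ∀ (r : ℕ) (s : Fin p → ℕ) (si : Fin r → (Fin p → ℕ)) (z : Fin r → ℤ),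
    s ∈ S → (∀ i, si i ∈ S) → (∀ i, leC C (si i) s) →
    ∀ t ∈ C, (∀ j, (t j : ℤ) = ∑ i, z i * (si i j : ℤ)) → s + t ∈ S


lemma AdmissibleOrder.finset_min {p : ℕ} (O : AdmissibleOrder p) :
    ∀ s : Finset (Fin p → ℕ), s.Nonempty → ∃ a ∈ s, ∀ b ∈ s, O.le a b := by
  classical
  intro s hs
  induction s using Finset.induction_on with
  | empty => exact absurd hs (by simp)
  | @insert c t hc ih =>
    by_cases ht : t.Nonempty
    · obtain ⟨a, ha, hmin⟩ := ih ht
      rcases O.le_total c a with h1 | h1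
      · refine ⟨c, Finset.mem_insert_self _ _, fun b hb => ?_⟩
        rcases Finset.mem_insert.mp hb with rfl | hb
        · exact O.le_refl _
        · exact O.le_trans _ _ _ h1 (hmin b hb)
      · refine ⟨a, Finset.mem_insert_of_mem ha, fun b hb => ?_⟩
        rcases Finset.mem_insert.mp hb with rfl | hb
        · exact h1
        · exact hmin b hb
    · rw [Finset.not_nonempty_iff_eq_empty] at ht
      subst ht
      refine ⟨c, by simp, fun b hb => ?_⟩
      simp only [Finset.mem_insert, Finset.notMem_empty, or_false] at hb
      subst hb; exact O.le_refl _

lemma AdmissibleOrder.set_min {p : ℕ} (O : AdmissibleOrder p) (s : Set (Fin p → ℕ))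
    (hfin : s.Finite) (hne : s.Nonempty) : ∃ a ∈ s, ∀ b ∈ s, O.le a b := by
  obtain ⟨a, ha, hmin⟩ := O.finset_min hfin.toFinset (by simpa using hne)
  exact ⟨a, hfin.mem_toFinset.mp ha, fun b hb => hmin b (hfin.mem_toFinset.mpr hb)⟩

lemma BSet_le {p : ℕ} (O : AdmissibleOrder p) (C : Set (Fin p → ℕ)) (f : Fin p → ℕ)
    {z : Fin p → ℕ} (hz : z ∈ BSet C f) : O.le z f := by
  obtain ⟨_, y, hyC, hzy⟩ := hz
  have := O.add_right 0 y z (O.zero_le y)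
  simpa [add_comm, hzy] using this

/-- For a B-semigroup T with respect to f and x ∈ B(f) \ T: T ∪ {x} is a B-semigroup with
respect to f satisfying (T ∪ {x}) \ {α(T ∪ {x})} = T iff x ∈ SG(T) and x ≺ α(T). -/
theorem statement5 (p : ℕ) (hp : 0 < p) (C : Set (Fin p → ℕ)) (hC : IsIntegerCone p C)
    (O : AdmissibleOrder p) (f : Fin p → ℕ) (hfC : f ∈ C) (hf0 : f ≠ 0)
    (T : Set (Fin p → ℕ)) (hT : IsBSemigroup O C T f)
    (x : Fin p → ℕ) (hx : x ∈ BSet C f) (hxT : x ∉ T) :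
    (IsBSemigroup O C (insert x T) f ∧
        ∃ a, IsAlpha O C (insert x T) f a ∧ (insert x T) \ {a} = T) ↔
      (SpecialGap C T x ∧ ∃ a, IsAlpha O C T f a ∧ O.lt x a) := by
  obtain ⟨⟨hTC, hT0, hTadd, hTfin⟩, ⟨⟨hfC', hfT⟩, hfmax⟩, hTB⟩ := hT
  have hx0 : x ≠ 0 := fun h => hxT (h ▸ hT0)
  have hxC : x ∈ C := hx.1
  have cancel : ∀ u v : Fin p → ℕ, x + u = x + v → u = v := by
    intro u v h
    funext i
    have := congrFun h i
    simp only [Pi.add_apply] at this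
    omega
  constructor
  · rintro ⟨⟨⟨hSC, hS0, hSadd, hSfin⟩, ⟨⟨hfC2, hfS⟩, hfmax2⟩, hSB⟩, a, hal, heq⟩
    have hax : x = a := by
      by_contra hne
      have hmem : x ∈ insert x T \ {a} := ⟨mem_insert _ _, fun h => hne (Set.mem_singleton_iff.mp h)⟩
      rw [heq] at hmem
      exact hxT hmem
    subst hax
    have hxf : x ≠ f := fun h => hfS (h ▸ mem_insert _ _)
    have hmin : ∀ y ∈ insert x T, y ≠ 0 → y ∈ BSet C f → O.le x y := by
      rcases hal with ⟨_, _, _, h⟩ | ⟨h, _⟩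
      · exact h
      · exact absurd (h x ⟨mem_insert _ _, hx⟩) hx0
    refine ⟨⟨⟨hxC, hxT⟩, ?_, ?_⟩, ?_⟩
    · have h2 : x + x ∈ insert x T := hSadd x (mem_insert _ _) x (mem_insert _ _)
      rcases h2 with h2 | h2
      · exfalso
        apply hx0
        have : x + x = x + 0 := by simpa using h2.symm
        exact (cancel x 0 this).symm ▸ rfl
      · exact h2
    · intro t ht ht0
      have h2 : x + t ∈ insert x T := hSadd x (mem_insert _ _) t (Or.inr ht)
      rcases h2 with h2 | h2
      · exfalso
        apply ht0
        have : x + t = x + 0 := by simpa using h2.symm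
        exact cancel t 0 this
      · exact h2
    · by_cases hcase : ∀ y ∈ T ∩ BSet C f, y = 0
      · exact ⟨f, Or.inr ⟨hcase, rfl⟩, BSet_le O C f hx, hxf⟩
      · push_neg at hcase
        obtain ⟨y, hy, hy0⟩ := hcase
        set s : Set (Fin p → ℕ) := {z | z ∈ T ∧ z ≠ 0 ∧ z ∈ BSet C f} with hs
        have hsfin : s.Finite := (O.finite_le f).subset (fun z hz => BSet_le O C f hz.2.2)
        have hsne : s.Nonempty := ⟨y, hy.1, hy0, hy.2⟩
        obtain ⟨a, ha, hamin⟩ := O.set_min s hsfin hsne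
        refine ⟨a, Or.inl ⟨ha.1, ha.2.1, ha.2.2, fun z hz hz0 hzB => hamin z ⟨hz, hz0, hzB⟩⟩, ?_, ?_⟩
        · exact hmin a (Or.inr ha.1) ha.2.1 ha.2.2
        · exact fun h => hxT (h ▸ ha.1)
  · rintro ⟨⟨⟨_, _⟩, hxx, hxt⟩, a, hal, hxa⟩
    have hxflt : O.lt x f := by
      rcases hal with ⟨haT, ha0, haB, _⟩ | ⟨_, rfl⟩
      · have haf : O.le a f := BSet_le O C f haB
        refine ⟨O.le_trans _ _ _ hxa.1 haf, fun h => hxa.2 ?_⟩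
        exact O.le_antisymm _ _ hxa.1 (h ▸ haf)
      · exact hxa
    have hxf : x ≠ f := hxflt.2
    have hclosed : ∀ u ∈ insert x T, ∀ v ∈ insert x T, u + v ∈ insert x T := by
      rintro u (rfl | hu) v (rfl | hv)
      · exact Or.inr hxx
      · by_cases hv0 : v = 0
        · subst hv0; simpa using Or.inl rfl
        · exact Or.inr (hxt v hv hv0)
      · by_cases hu0 : u = 0
        · subst hu0; simpa using Or.inl rfl
        · rw [add_comm]; exact Or.inr (hxt u hu hu0)
      · exact Or.inr (hTadd u hu v hv)
    refine ⟨⟨⟨Set.insert_subset hxC hTC, Or.inr hT0, hclosed,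
        hTfin.subset (fun z hz => ⟨hz.1, fun h => hz.2 (Or.inr h)⟩)⟩,
        ⟨⟨hfC', fun h => ?_⟩, fun z hz => hfmax z ⟨hz.1, fun h => hz.2 (Or.inr h)⟩⟩,
        fun z hz => Or.inr (hTB hz)⟩, x, Or.inl ⟨mem_insert _ _, hx0, hx, ?_⟩,
        Set.insert_diff_self_of_notMem hxT⟩
    · rcases h with h | h
      · exact hxf h.symm
      · exact hfT h
    · rintro z (rfl | hz) hz0 hzB
      · exact O.le_refl _
      · rcases hal with ⟨_, _, _, hamin⟩ | ⟨hall, _⟩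
        · exact O.le_trans _ _ _ hxa.1 (hamin z hz hz0 hzB)
        · exact absurd (hall z ⟨hz, hzB⟩) hz0
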